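/- arXiv:2205.08446 — 8 statements merged into one kernel-verified Lean document; each statement's English description precedes it below -/
import Mathlib

section
/- Let F : R^d → R^d be monotone (⟨F(x) - F(y), x - y⟩ ≥ 0 for all x, y) and L-Lipschitz, and let γ > 0. Given points x^k, x^{k+1}, x̃^{k-1}, x̃^k in R^d satisfying x̃^k = x^k - γ F(x̃^{k-1}) and x^{k+1} = x^k - γ F(x̃^k), the following holds: ‖F(x^{k+1})‖² + 2‖F(x^{k+1}) - F(x̃^k)‖² ≤ ‖F(x^k)‖² + 2‖F(x^k) - F(x̃^{k-1})‖² + 3(L²γ² - 2/9)‖F(x̃^k) - F(x̃^{k-1})‖². -/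
open scoped RealInnerProductSpace

theorem peg_key_lemma (d : ℕ) (F : EuclideanSpace ℝ (Fin d) → EuclideanSpace ℝ (Fin d))
    (L γ : ℝ)
    (hmono : ∀ x y, 0 ≤ ⟪F x - F y, x - y⟫)
    (hLip : ∀ x y, ‖F x - F y‖ ≤ L * ‖x - y‖)
    (hγ : 0 < γ)
    (xk xk1 xtm xt : EuclideanSpace ℝ (Fin d))
    (hxt : xt = xk - γ • F xtm)
    (hxk1 : xk1 = xk - γ • F xt) :
    ‖F xk1‖ ^ 2 + 2 * ‖F xk1 - F xt‖ ^ 2 ≤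
      ‖F xk‖ ^ 2 + 2 * ‖F xk - F xtm‖ ^ 2 +
        3 * (L ^ 2 * γ ^ 2 - 2 / 9) * ‖F xt - F xtm‖ ^ 2 := by
  set a := F xk1 with ha
  set b := F xk with hb
  set c := F xt with hc
  set e := F xtm with he
  have hsub1 : xk1 - xt = γ • (e - c) := by
    rw [hxt, hxk1]; module
  have hsub2 : xk1 - xk = -(γ • c) := by
    rw [hxk1]; module
  have h1 : ‖a - c‖ ≤ L * (γ * ‖c - e‖) := by
    have h := hLip xk1 xt
    rw [hsub1, norm_smul, Real.norm_eq_abs, abs_of_pos hγ, norm_sub_rev e c] at h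
    linarith [h]
  have hsq : ‖a - c‖ ^ 2 ≤ L ^ 2 * γ ^ 2 * ‖c - e‖ ^ 2 := by
    nlinarith [norm_nonneg (a - c), norm_nonneg (c - e), h1]
  have h2 : ⟪a - b, c⟫ ≤ 0 := by
    have h := hmono xk1 xk
    rw [hsub2, inner_neg_right, real_inner_smul_right] at h
    nlinarith [h]
  have h3 : (0:ℝ) ≤ ‖(3:ℝ) • b - (2:ℝ) • e - c‖ ^ 2 := by positivity
  have e3 : ‖(3:ℝ) • b - (2:ℝ) • e - c‖ ^ 2
      = 9 * ‖b‖ ^ 2 + 4 * ‖e‖ ^ 2 + ‖c‖ ^ 2 - 12 * ⟪b, e⟫ - 6 * ⟪b, c⟫ + 4 * ⟪e, c⟫ := by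
    simp only [← real_inner_self_eq_norm_sq, inner_sub_left, inner_sub_right,
      real_inner_smul_left, real_inner_smul_right]
    rw [real_inner_comm e b, real_inner_comm c b, real_inner_comm c e]
    ring
  have eac : ‖a - c‖ ^ 2 = ‖a‖ ^ 2 - 2 * ⟪a, c⟫ + ‖c‖ ^ 2 := by
    rw [@norm_sub_sq_real]
  have ebe : ‖b - e‖ ^ 2 = ‖b‖ ^ 2 - 2 * ⟪b, e⟫ + ‖e‖ ^ 2 := by
    rw [@norm_sub_sq_real]
  have ece : ‖c - e‖ ^ 2 = ‖c‖ ^ 2 - 2 * ⟪c, e⟫ + ‖e‖ ^ 2 := by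
    rw [@norm_sub_sq_real]
  have eab : ⟪a - b, c⟫ = ⟪a, c⟫ - ⟪b, c⟫ := by
    rw [inner_sub_left]
  rw [eab] at h2
  rw [e3] at h3
  have hce : ⟪c, e⟫ = ⟪e, c⟫ := real_inner_comm e c
  have goalrw : 3 * (L ^ 2 * γ ^ 2 - 2 / 9) * ‖c - e‖ ^ 2
      = 3 * (L ^ 2 * γ ^ 2 * ‖c - e‖ ^ 2) - (2 / 3) * ‖c - e‖ ^ 2 := by ring
  rw [goalrw]
  linarith [hsq, h2, h3, eac, ebe, ece, hce]
end

section
/- Let F : R^d → R^d be monotone and L-Lipschitz with 0 < γ ≤ √2/(3L). Given points x^k, x^{k+1}, x̃^{k-1}, x̃^k satisfying x̃^k = x^k - γ F(x̃^{k-1}) and x^{k+1} = x^k - γ F(x̃^k), one has ‖F(x^{k+1})‖² + 2‖F(x^{k+1}) - F(x̃^k)‖² ≤ ‖F(x^k)‖² + 2‖F(x^k) - F(x̃^{k-1})‖². -/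
open scoped RealInnerProductSpace

lemma peg_aux {E : Type*} [NormedAddCommGroup E] [InnerProductSpace ℝ E]
    (a b c p : E)
    (hmono1 : 0 ≤ ⟪a - c, b⟫)
    (hlip1 : ‖c - b‖ ^ 2 ≤ 2 / 9 * ‖p - b‖ ^ 2) :
    ‖c‖ ^ 2 + 2 * ‖c - b‖ ^ 2 ≤ ‖a‖ ^ 2 + 2 * ‖a - p‖ ^ 2 := by
  have hsos : 0 ≤ ⟪(3:ℝ) • a - b - (2:ℝ) • p, (3:ℝ) • a - b - (2:ℝ) • p⟫ :=
    real_inner_self_nonneg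
  have e1 : ‖c - b‖ ^ 2 = ‖c‖ ^ 2 - 2 * ⟪c, b⟫ + ‖b‖ ^ 2 := norm_sub_sq_real c b
  have e2 : ‖a - p‖ ^ 2 = ‖a‖ ^ 2 - 2 * ⟪a, p⟫ + ‖p‖ ^ 2 := norm_sub_sq_real a p
  have e3 : ‖p - b‖ ^ 2 = ‖p‖ ^ 2 - 2 * ⟪p, b⟫ + ‖b‖ ^ 2 := norm_sub_sq_real p b
  have e4 : ⟪a - c, b⟫ = ⟪a, b⟫ - ⟪c, b⟫ := inner_sub_left a c b
  have e5 : ⟪(3:ℝ) • a - b - (2:ℝ) • p, (3:ℝ) • a - b - (2:ℝ) • p⟫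
      = 9 * ‖a‖ ^ 2 + ‖b‖ ^ 2 + 4 * ‖p‖ ^ 2 - 6 * ⟪a, b⟫ - 12 * ⟪a, p⟫ + 4 * ⟪p, b⟫ := by
    simp only [inner_sub_left, inner_sub_right, real_inner_smul_left, real_inner_smul_right,
      real_inner_self_eq_norm_sq]
    rw [real_inner_comm b a, real_inner_comm p a, real_inner_comm b p,
      norm_smul, norm_smul, Real.norm_eq_abs, Real.norm_eq_abs,
      abs_of_nonneg (by norm_num : (0:ℝ) ≤ 3), abs_of_nonneg (by norm_num : (0:ℝ) ≤ 2)]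
    ring
  rw [e4] at hmono1
  rw [e1, e3] at hlip1
  rw [e5] at hsos
  rw [e1, e2]
  linarith

theorem peg_potential_decrease (d : ℕ)
    (F : EuclideanSpace ℝ (Fin d) → EuclideanSpace ℝ (Fin d)) (L γ : ℝ)
    (hL : 0 < L)
    (hmono : ∀ x y, 0 ≤ ⟪F x - F y, x - y⟫)
    (hLip : ∀ x y, ‖F x - F y‖ ≤ L * ‖x - y‖)
    (hγpos : 0 < γ) (hγ : γ ≤ Real.sqrt 2 / (3 * L))
    (xk xk1 xtm xt : EuclideanSpace ℝ (Fin d))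
    (hxt : xt = xk - γ • F xtm)
    (hxk1 : xk1 = xk - γ • F xt) :
    ‖F xk1‖ ^ 2 + 2 * ‖F xk1 - F xt‖ ^ 2 ≤ ‖F xk‖ ^ 2 + 2 * ‖F xk - F xtm‖ ^ 2 := by
  have hmono1 : 0 ≤ ⟪F xk - F xk1, F xt⟫ := by
    have h := hmono xk1 xk
    have hdiff : xk1 - xk = (-γ) • F xt := by
      rw [hxk1]; rw [neg_smul]; abel
    rw [hdiff, real_inner_smul_right] at h
    have h2 : ⟪F xk1 - F xk, F xt⟫ = -⟪F xk - F xk1, F xt⟫ := by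
      rw [← inner_neg_left]; congr 1; abel
    rw [h2] at h
    nlinarith [h, hγpos]
  have hLγ : γ * L ≤ Real.sqrt 2 / 3 := by
    have h3L : (0:ℝ) < 3 * L := by linarith
    rw [le_div_iff₀ h3L] at hγ
    rw [le_div_iff₀ (by norm_num : (0:ℝ) < 3)]
    linarith
  have hγL2 : (γ * L) ^ 2 ≤ 2 / 9 := by
    have hs : Real.sqrt 2 * Real.sqrt 2 = 2 := Real.mul_self_sqrt (by norm_num)
    have h0 : 0 ≤ γ * L := mul_nonneg hγpos.le hL.le
    have h1 := mul_self_le_mul_self h0 hLγ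
    have h2 : Real.sqrt 2 / 3 * (Real.sqrt 2 / 3) = 2 / 9 := by
      rw [div_mul_div_comm, hs]; norm_num
    nlinarith [h1, h2]
  have hlip1 : ‖F xk1 - F xt‖ ^ 2 ≤ 2 / 9 * ‖F xtm - F xt‖ ^ 2 := by
    have h := hLip xk1 xt
    have hdiff : xk1 - xt = γ • (F xtm - F xt) := by
      rw [hxk1, hxt, smul_sub]; abel
    rw [hdiff, norm_smul, Real.norm_eq_abs, abs_of_pos hγpos] at h
    have h2 : ‖F xk1 - F xt‖ ^ 2 ≤ (γ * L) ^ 2 * ‖F xtm - F xt‖ ^ 2 := by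
      nlinarith [norm_nonneg (F xk1 - F xt), norm_nonneg (F xtm - F xt),
        mul_nonneg (mul_nonneg hγpos.le hL.le) (norm_nonneg (F xtm - F xt))]
    nlinarith [sq_nonneg ‖F xtm - F xt‖]
  exact peg_aux (F xk) (F xt) (F xk1) (F xtm) hmono1 hlip1
end

section
/- Let F be monotone and L-Lipschitz on R^d, let x* satisfy F(x*) = 0, and consider one PEG step x̃^k = x^k - γ F(x̃^{k-1}), x^{k+1} = x^k - γ F(x̃^k) with γ > 0. Then ‖x^{k+1} - x*‖² ≤ ‖x^k - x*‖² + γ²‖F(x̃^{k-1}) - F(x̃^k)‖² - γ²‖F(x̃^{k-1})‖². -/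
open scoped RealInnerProductSpace

theorem peg_distance_decrease (d : ℕ)
    (F : EuclideanSpace ℝ (Fin d) → EuclideanSpace ℝ (Fin d)) (L γ : ℝ)
    (hmono : ∀ x y, 0 ≤ ⟪F x - F y, x - y⟫)
    (hLip : ∀ x y, ‖F x - F y‖ ≤ L * ‖x - y‖)
    (hγ : 0 < γ)
    (xs : EuclideanSpace ℝ (Fin d)) (hxs : F xs = 0)
    (xk xk1 xtm xt : EuclideanSpace ℝ (Fin d))
    (hxt : xt = xk - γ • F xtm)
    (hxk1 : xk1 = xk - γ • F xt) :
    ‖xk1 - xs‖ ^ 2 ≤ ‖xk - xs‖ ^ 2 + γ ^ 2 * ‖F xtm - F xt‖ ^ 2 - γ ^ 2 * ‖F xtm‖ ^ 2 := by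
  set a := F xt with ha
  set b := F xtm with hb
  have hmon : 0 ≤ ⟪a, xt - xs⟫ := by
    have := hmono xt xs
    rwa [hxs, sub_zero] at this
  have h1 : ‖xk1 - xs‖ ^ 2 = ‖xk - xs‖ ^ 2 - 2 * γ * ⟪a, xk - xs⟫ + γ ^ 2 * ‖a‖ ^ 2 := by
    have : xk1 - xs = (xk - xs) - γ • a := by rw [hxk1]; abel
    rw [this, norm_sub_sq_real, real_inner_smul_right, norm_smul, real_inner_comm]
    simp [abs_of_pos hγ]
    ring
  have h2 : ⟪a, xk - xs⟫ = ⟪a, xt - xs⟫ + γ * ⟪a, b⟫ := by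
    have : xk - xs = (xt - xs) + γ • b := by rw [hxt]; abel
    rw [this, inner_add_right, real_inner_smul_right]
  have h3 : ‖b - a‖ ^ 2 = ‖b‖ ^ 2 - 2 * ⟪a, b⟫ + ‖a‖ ^ 2 := by
    rw [norm_sub_sq_real, real_inner_comm]
  rw [h1, h2, h3]
  nlinarith [sq_nonneg γ, mul_nonneg (le_of_lt hγ) hmon]
end

section
/- Let F be monotone and L-Lipschitz on R^d with a zero x*, and let {x^k, x̃^k} be iterates of PEG with stepsize γ ≤ 1/(3L) (initialized by x̃^0 = x^0, x^1 = x^0 - γF(x^0), then x̃^k = x^k - γ F(x̃^{k-1}), x^{k+1} = x^k - γ F(x̃^k)). Define Φ_k = ‖x^k - x*‖² + ((k+32)/3)γ²(‖F(x^k)‖² + 2‖F(x^k) - F(x̃^{k-1})‖²), with the convention F(x̃^{-1}) = 0. Then Φ_{k+1} ≤ Φ_k for all k ≥ 0. -/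
open scoped RealInnerProductSpace

private lemma expand4 {d : ℕ} (a b c e : EuclideanSpace ℝ (Fin d)) (p q r s : ℝ) :
    ‖p • a + q • b + r • c + s • e‖ ^ 2 =
      p ^ 2 * ‖a‖ ^ 2 + q ^ 2 * ‖b‖ ^ 2 + r ^ 2 * ‖c‖ ^ 2 + s ^ 2 * ‖e‖ ^ 2
        + 2 * p * q * ⟪a, b⟫ + 2 * p * r * ⟪a, c⟫ + 2 * p * s * ⟪a, e⟫
        + 2 * q * r * ⟪b, c⟫ + 2 * q * s * ⟪b, e⟫ + 2 * r * s * ⟪c, e⟫ := by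
  rw [← real_inner_self_eq_norm_sq]
  simp only [inner_add_left, inner_add_right, real_inner_smul_left, real_inner_smul_right]
  simp only [real_inner_self_eq_norm_sq]
  rw [real_inner_comm b a, real_inner_comm c a, real_inner_comm e a, real_inner_comm c b,
    real_inner_comm e b, real_inner_comm e c]
  ring

set_option maxHeartbeats 1000000 in
theorem peg_lyapunov_decrease (d : ℕ)
    (F : EuclideanSpace ℝ (Fin d) → EuclideanSpace ℝ (Fin d)) (L γ : ℝ)
    (hL : 0 < L)
    (hmono : ∀ x y, 0 ≤ ⟪F x - F y, x - y⟫)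
    (hLip : ∀ x y, ‖F x - F y‖ ≤ L * ‖x - y‖)
    (hγpos : 0 < γ) (hγ : γ ≤ 1 / (3 * L))
    (xs : EuclideanSpace ℝ (Fin d)) (hxs : F xs = 0)
    (x xt : ℕ → EuclideanSpace ℝ (Fin d))
    (hxt0 : xt 0 = x 0)
    (hx1 : x 1 = x 0 - γ • F (x 0))
    (hxt : ∀ k, 1 ≤ k → xt k = x k - γ • F (xt (k - 1)))
    (hx : ∀ k, 1 ≤ k → x (k + 1) = x k - γ • F (xt k)) :
    ∀ k : ℕ,
      ‖x (k + 1) - xs‖ ^ 2 +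
          (((k : ℝ) + 1 + 32) / 3) * γ ^ 2 *
            (‖F (x (k + 1))‖ ^ 2 + 2 * ‖F (x (k + 1)) - F (xt k)‖ ^ 2) ≤
        ‖x k - xs‖ ^ 2 +
          (((k : ℝ) + 32) / 3) * γ ^ 2 *
            (‖F (x k)‖ ^ 2 +
              2 * ‖F (x k) - (if k = 0 then 0 else F (xt (k - 1)))‖ ^ 2) := by
  intro k
  -- γ L bound
  have hγL : γ * L ≤ 1 / 3 := by
    rw [le_div_iff₀ (by positivity : (0:ℝ) < 3 * L)] at hγ
    nlinarith
  -- step relations, valid for all k ≥ 0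
  have hb : xt k = x k - γ • (if k = 0 then 0 else F (xt (k - 1))) := by
    cases k with
    | zero => simp [hxt0]
    | succ n => simpa using hxt (n + 1) (by omega)
  have hc : x (k + 1) = x k - γ • F (xt k) := by
    cases k with
    | zero => rw [hx1, hxt0]
    | succ n => exact hx (n + 1) (by omega)
  set a := F (x k) with ha_def
  set b := (if k = 0 then 0 else F (xt (k - 1))) with hb_def
  set c := F (xt k) with hc_def
  set e := F (x (k + 1)) with he_def
  set z := x k - xs with hz_def
  -- point difference identities
  have dXXt : x k - xt k = γ • b := by rw [hb]; exact sub_sub_cancel _ _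
  have dXX1 : x k - x (k + 1) = γ • c := by rw [hc]; exact sub_sub_cancel _ _
  have dXtX1 : xt k - x (k + 1) = γ • (c - b) := by
    rw [hb, hc, smul_sub]; abel
  have dXtS : xt k - xs = z - γ • b := by rw [hb, hz_def, sub_right_comm]
  have dX1S : x (k + 1) - xs = z - γ • c := by rw [hc, hz_def, sub_right_comm]
  -- monotonicity facts
  have m1 : 0 ≤ ⟪a, b⟫ - ⟪c, b⟫ := by
    have h := hmono (x k) (xt k)
    rw [dXXt, real_inner_smul_right, inner_sub_left] at h
    nlinarith
  have m2 : 0 ≤ ⟪a, c⟫ - ⟪e, c⟫ := by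
    have h := hmono (x k) (x (k + 1))
    rw [dXX1, real_inner_smul_right, inner_sub_left] at h
    nlinarith
  have m5 : 0 ≤ ⟪c, z⟫ - γ * ⟪c, b⟫ := by
    have h := hmono (xt k) xs
    rw [hxs, sub_zero, dXtS, inner_sub_right, real_inner_smul_right] at h
    exact h
  -- Lipschitz facts (squared)
  have l2 : ‖a - e‖ ^ 2 ≤ (1 / 9) * ‖c‖ ^ 2 := by
    have h := hLip (x k) (x (k + 1))
    rw [dXX1, norm_smul, Real.norm_eq_abs, abs_of_pos hγpos] at h
    have h' : ‖a - e‖ ≤ (1 / 3) * ‖c‖ := by nlinarith [norm_nonneg c, hL.le]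
    nlinarith [norm_nonneg (a - e), norm_nonneg c]
  have l3 : ‖c - e‖ ^ 2 ≤ (1 / 9) * ‖c - b‖ ^ 2 := by
    have h := hLip (xt k) (x (k + 1))
    rw [dXtX1, norm_smul, Real.norm_eq_abs, abs_of_pos hγpos] at h
    have h' : ‖c - e‖ ≤ (1 / 3) * ‖c - b‖ := by nlinarith [norm_nonneg (c - b), hL.le]
    nlinarith [norm_nonneg (c - e), norm_nonneg (c - b)]
  -- part A : nonexpansiveness of the function-value part
  have hA : ‖e‖ ^ 2 + 2 * ‖e - c‖ ^ 2 ≤ ‖a‖ ^ 2 + 2 * ‖a - b‖ ^ 2 := by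
    linarith [m2, l3, sq_nonneg ‖(3:ℝ) • a + (-2:ℝ) • b + (-1:ℝ) • c + (0:ℝ) • e‖,
      expand4 a b c e 3 (-2) (-1) 0,
      sq_nonneg ‖(0:ℝ) • a + (1:ℝ) • b + (-1:ℝ) • c + (0:ℝ) • e‖,
      expand4 a b c e 0 1 (-1) 0,
      norm_sub_sq_real e c, norm_sub_sq_real a b, norm_sub_sq_real c e, norm_sub_sq_real c b,
      norm_sub_sq_real a e,
      real_inner_comm e c, real_inner_comm c b, real_inner_comm a b, real_inner_comm a c,
      real_inner_comm a e, real_inner_comm b c, real_inner_comm b e, real_inner_comm c e]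
  -- part B (pure function-value part)
  have hBpure : -2 * ⟪c, b⟫ + ‖c‖ ^ 2 + 11 * (‖e‖ ^ 2 + 2 * ‖e - c‖ ^ 2)
      ≤ (32 / 3) * (‖a‖ ^ 2 + 2 * ‖a - b‖ ^ 2) := by
    linarith [m1, m2, l2, l3, sq_nonneg ‖e‖,
      sq_nonneg ‖(216:ℝ) • a + (-131:ℝ) • b + (-69:ℝ) • c + (-24:ℝ) • e‖,
      expand4 a b c e 216 (-131) (-69) (-24),
      sq_nonneg ‖(0:ℝ) • a + (5879:ℝ) • b + (-2487:ℝ) • c + (-3144:ℝ) • e‖,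
      expand4 a b c e 0 5879 (-2487) (-3144),
      sq_nonneg ‖(0:ℝ) • a + (0:ℝ) • b + (18152:ℝ) • c + (-28361:ℝ) • e‖,
      expand4 a b c e 0 0 18152 (-28361),
      norm_sub_sq_real e c, norm_sub_sq_real a b, norm_sub_sq_real c e, norm_sub_sq_real c b,
      norm_sub_sq_real a e,
      real_inner_comm e c, real_inner_comm c b, real_inner_comm a b, real_inner_comm a c,
      real_inner_comm a e, real_inner_comm b c, real_inner_comm b e, real_inner_comm c e]
  -- part B with the distance term
  have hzc : ‖z - γ • c‖ ^ 2 = ‖z‖ ^ 2 - 2 * (γ * ⟪c, z⟫) + γ ^ 2 * ‖c‖ ^ 2 := by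
    rw [norm_sub_sq_real, real_inner_smul_right, norm_smul, Real.norm_eq_abs, mul_pow, sq_abs,
      real_inner_comm z c]
  have hB : ‖z - γ • c‖ ^ 2 + 11 * γ ^ 2 * (‖e‖ ^ 2 + 2 * ‖e - c‖ ^ 2)
      ≤ ‖z‖ ^ 2 + (32 / 3) * γ ^ 2 * (‖a‖ ^ 2 + 2 * ‖a - b‖ ^ 2) := by
    have h1 := mul_le_mul_of_nonneg_left hBpure (sq_nonneg γ)
    have h2 : 0 ≤ γ * (⟪c, z⟫ - γ * ⟪c, b⟫) := mul_nonneg hγpos.le m5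
    linarith [h1, h2, hzc]
  -- combine
  rw [dX1S]
  have hK : (0:ℝ) ≤ (k : ℝ) := Nat.cast_nonneg k
  have hKprod := mul_nonneg (mul_nonneg hK (sq_nonneg γ)) (sub_nonneg.mpr hA)
  linarith [hB, hKprod]
end

section
/- Let F be monotone and L-Lipschitz on R^d with F(x*) = 0, and let {x^k} be iterates of PEG with stepsize γ = 1/(3L). Then for all N ≥ 0, ‖F(x^N)‖² ≤ 123 L² ‖x^0 - x*‖² / (N + 32). -/
open scoped RealInnerProductSpace

section PegAux

variable {E : Type*} [NormedAddCommGroup E] [InnerProductSpace ℝ E]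

lemma peg_cert_step (g2 g3 b1 b2 b3 : E)
    (hL9 : ‖b2 - g3‖^2 ≤ (1/9) * ‖b2 - b1‖^2)
    (hM : 0 ≤ ⟪g2 - g3, b2⟫) :
    ‖g3‖^2 - (1/4)*‖b3‖^2 + (1/2)*‖b2‖^2 + ⟪g3,b3⟫ - (1/2)*⟪g3,b2⟫ - (1/2)*⟪b3,b2⟫ ≤
    ‖g2‖^2 - (1/4)*‖b2‖^2 + (1/2)*‖b1‖^2 + ⟪g2,b2⟫ - (1/2)*⟪g2,b1⟫ - (1/2)*⟪b2,b1⟫ := by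
  have q1 : (0:ℝ) ≤ ‖g2 - (1/4:ℝ)•b1 - (3/4:ℝ)•b2‖^2 := by positivity
  have q2 : (0:ℝ) ≤ ‖g3 - (5/7:ℝ)•b2 - (2/7:ℝ)•b3‖^2 := by positivity
  have q3 : (0:ℝ) ≤ ‖b1 - b2‖^2 := by positivity
  have q4 : (0:ℝ) ≤ ‖b2 - b3‖^2 := by positivity
  simp only [← real_inner_self_eq_norm_sq, inner_sub_left, inner_sub_right,
    real_inner_smul_left, real_inner_smul_right] at q1 q2 q3 q4 hL9 hM ⊢
  linarith [real_inner_comm g2 b1, real_inner_comm g2 b2, real_inner_comm g2 b3,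
    real_inner_comm g2 g3, real_inner_comm g3 b1, real_inner_comm g3 b2,
    real_inner_comm g3 b3, real_inner_comm b1 b2, real_inner_comm b1 b3,
    real_inner_comm b2 b3]

lemma peg_cert_lb (g h p : E)
    (h1 : ‖g - h‖^2 ≤ (1/9)*‖p‖^2) (h2 : 0 ≤ ⟪g - h, p⟫) :
    ‖g‖^2 ≤ ‖g‖^2 - (1/4)*‖h‖^2 + (1/2)*‖p‖^2 + ⟪g,h⟫ - (1/2)*⟪g,p⟫ - (1/2)*⟪h,p⟫ := by
  have q1 : (0:ℝ) ≤ ‖g - (3/4:ℝ)•p‖^2 := by positivity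
  have q2 : (0:ℝ) ≤ ‖h - (1/2:ℝ)•p‖^2 := by positivity
  have q3 : (0:ℝ) ≤ ‖p‖^2 := by positivity
  simp only [← real_inner_self_eq_norm_sq, inner_sub_left, inner_sub_right,
    real_inner_smul_left, real_inner_smul_right] at q1 q2 q3 h1 h2 ⊢
  linarith [real_inner_comm g h, real_inner_comm g p, real_inner_comm h p]

lemma peg_cert_ub (g h p : E)
    (h1 : ‖g - h‖^2 ≤ (1/9)*‖p‖^2) (h2 : 0 ≤ ⟪g - h, p⟫) :
    ‖g‖^2 - (1/4)*‖h‖^2 + (1/2)*‖p‖^2 + ⟪g,h⟫ - (1/2)*⟪g,p⟫ - (1/2)*⟪h,p⟫ ≤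
    (5/2)*(‖h‖^2 + ‖p‖^2) := by
  have q1 : (0:ℝ) ≤ ‖g - (9/7:ℝ)•h - (2/7:ℝ)•p‖^2 := by positivity
  have q2 : (0:ℝ) ≤ ‖h + (2/9:ℝ)•p‖^2 := by positivity
  have q3 : (0:ℝ) ≤ ‖p‖^2 := by positivity
  simp only [← real_inner_self_eq_norm_sq, inner_sub_left, inner_sub_right, inner_add_left,
    inner_add_right, real_inner_smul_left, real_inner_smul_right] at q1 q2 q3 h1 h2 ⊢
  linarith [real_inner_comm g h, real_inner_comm g p, real_inner_comm h p]

lemma peg_descent_vec (u v w : E) (γ : ℝ) (hγ : 0 ≤ γ) (hm : 0 ≤ ⟪v, u - γ•w⟫) :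
    ‖u - γ•v‖^2 ≤ ‖u‖^2 + γ^2*(‖v - w‖^2 - ‖w‖^2) := by
  have h : 0 ≤ γ * ⟪v, u - γ•w⟫ := mul_nonneg hγ hm
  simp only [inner_sub_right, real_inner_smul_right] at h
  simp only [← real_inner_self_eq_norm_sq, inner_sub_left, inner_sub_right,
    real_inner_smul_left, real_inner_smul_right]
  nlinarith [real_inner_comm u v, real_inner_comm v w]

lemma peg_a1_vec (u v : E) (γ : ℝ) (hγ : 0 ≤ γ) (hm : 0 ≤ ⟪v, u⟫) :
    ‖u - γ•v‖^2 ≤ ‖u‖^2 + γ^2*‖v‖^2 := by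
  have h : 0 ≤ γ * ⟪v, u⟫ := mul_nonneg hγ hm
  simp only [← real_inner_self_eq_norm_sq, inner_sub_left, inner_sub_right,
    real_inner_smul_left, real_inner_smul_right]
  nlinarith [real_inner_comm u v]

lemma peg_final_arith (X C nn : ℝ) (hX : 0 ≤ X) (hC : 0 ≤ C) (h67 : 67 ≤ nn)
    (h : nn * X ≤ (10675/144) * C) : X * (nn + 32) ≤ 123 * C := by
  have h32 : (0:ℝ) ≤ nn + 32 := by linarith
  have hprod := mul_le_mul_of_nonneg_right h h32
  have hCn : 0 ≤ C * (nn - 67) := mul_nonneg hC (by linarith)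
  nlinarith [hprod, hCn, hX]

end PegAux

set_option maxHeartbeats 2000000 in
theorem peg_last_iterate_rate (d : ℕ)
    (F : EuclideanSpace ℝ (Fin d) → EuclideanSpace ℝ (Fin d)) (L γ : ℝ)
    (hL : 0 < L)
    (hmono : ∀ x y, 0 ≤ ⟪F x - F y, x - y⟫)
    (hLip : ∀ x y, ‖F x - F y‖ ≤ L * ‖x - y‖)
    (hγ : γ = 1 / (3 * L))
    (xs : EuclideanSpace ℝ (Fin d)) (hxs : F xs = 0)
    (x xt : ℕ → EuclideanSpace ℝ (Fin d))
    (hxt0 : xt 0 = x 0)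
    (hx1 : x 1 = x 0 - γ • F (x 0))
    (hxt : ∀ k, 1 ≤ k → xt k = x k - γ • F (xt (k - 1)))
    (hx : ∀ k, 1 ≤ k → x (k + 1) = x k - γ • F (xt k)) :
    ∀ N : ℕ, ‖F (x N)‖ ^ 2 ≤ 123 * L ^ 2 * ‖x 0 - xs‖ ^ 2 / ((N : ℝ) + 32) := by
  have hγpos : 0 < γ := by rw [hγ]; positivity
  have hγL : L * γ = 1/3 := by rw [hγ]; field_simp
  have hγ2L : γ^2 * L^2 = 1/9 := by
    have : (L*γ)^2 = (1/3:ℝ)^2 := by rw [hγL]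
    nlinarith [this]
  -- shorthand definitions
  set r : ℕ → ℝ := fun k => ‖F (xt k)‖ with hr_def
  set s : ℕ → ℝ := fun k => ‖F (xt (k+1)) - F (xt k)‖ with hs_def
  set a : ℕ → ℝ := fun k => ‖x k - xs‖^2 with ha_def
  set ρ : ℕ → ℝ := fun k => ‖xt k - xs‖ with hρ_def
  have hrnn : ∀ k, 0 ≤ r k := fun k => norm_nonneg _
  have hsnn : ∀ k, 0 ≤ s k := fun k => norm_nonneg _
  have hann : ∀ k, 0 ≤ a k := fun k => sq_nonneg _
  have hρnn : ∀ k, 0 ≤ ρ k := fun k => norm_nonneg _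
  -- structural recurrences
  have hR1 : ∀ k, x (k+1) = x k - γ • F (xt k) := by
    intro k
    rcases Nat.eq_zero_or_pos k with h | h
    · subst h; rw [hx1, hxt0]
    · exact hx k h
  have hR2 : ∀ k, xt (k+1) = x (k+1) - γ • F (xt k) := by
    intro k
    have h := hxt (k+1) (by omega)
    simpa using h
  -- F bounded by distance to xs
  have hF0 : ∀ u, ‖F u‖ ≤ L * ‖u - xs‖ := by
    intro u
    have h := hLip u xs
    rwa [hxs, sub_zero] at h
  have hrρ : ∀ k, r k ≤ L * ρ k := fun k => hF0 (xt k)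
  have hγr : ∀ k, γ^2 * (r k)^2 ≤ (1/9) * (ρ k)^2 := by
    intro k
    have h := hrρ k
    have h2 : (r k)^2 ≤ L^2 * (ρ k)^2 := by nlinarith [hrnn k, hρnn k, hL.le]
    have h3 : γ^2 * (r k)^2 ≤ γ^2 * (L^2 * (ρ k)^2) :=
      mul_le_mul_of_nonneg_left h2 (sq_nonneg γ)
    calc γ^2 * (r k)^2 ≤ γ^2 * (L^2 * (ρ k)^2) := h3
      _ = (γ^2 * L^2) * (ρ k)^2 := by ring
      _ = (1/9) * (ρ k)^2 := by rw [hγ2L]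
  have hρ0 : (ρ 0)^2 = a 0 := by simp only [hρ_def, ha_def, hxt0]
  have hρs : ∀ k, ρ (k+1) ≤ ‖x (k+1) - xs‖ + γ * r k := by
    intro k
    have hdiff : xt (k+1) - xs = (x (k+1) - xs) - γ • F (xt k) := by
      rw [hR2 k]; abel
    calc ρ (k+1) = ‖(x (k+1) - xs) - γ • F (xt k)‖ := by rw [hρ_def]; simp only; rw [hdiff]
      _ ≤ ‖x (k+1) - xs‖ + ‖γ • F (xt k)‖ := norm_sub_le _ _
      _ = ‖x (k+1) - xs‖ + γ * r k := by
          rw [norm_smul, Real.norm_eq_abs, abs_of_pos hγpos]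
  -- descent inequality
  have hdesc : ∀ m, a (m+2) ≤ a (m+1) + γ^2 * ((s m)^2 - (r m)^2) := by
    intro m
    have hmono' : 0 ≤ ⟪F (xt (m+1)), (x (m+1) - xs) - γ • F (xt m)⟫ := by
      have h := hmono (xt (m+1)) xs
      rw [hxs, sub_zero] at h
      have hdiff : xt (m+1) - xs = (x (m+1) - xs) - γ • F (xt m) := by rw [hR2 m]; abel
      rwa [hdiff] at h
    have key := peg_descent_vec (x (m+1) - xs) (F (xt (m+1))) (F (xt m)) γ hγpos.le hmono'
    have hx2 : x (m+2) - xs = (x (m+1) - xs) - γ • F (xt (m+1)) := by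
      rw [hR1 (m+1)]; abel
    calc a (m+2) = ‖(x (m+1) - xs) - γ • F (xt (m+1))‖^2 := by
          rw [ha_def]; simp only; rw [hx2]
      _ ≤ ‖x (m+1) - xs‖^2 + γ^2*(‖F (xt (m+1)) - F (xt m)‖^2 - ‖F (xt m)‖^2) := key
      _ = a (m+1) + γ^2 * ((s m)^2 - (r m)^2) := by rw [ha_def, hs_def, hr_def]
  have ha1 : a 1 ≤ a 0 + γ^2 * (r 0)^2 := by
    have hmono' : 0 ≤ ⟪F (xt 0), x 0 - xs⟫ := by
      have h := hmono (x 0) xs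
      rw [hxs, sub_zero] at h
      rwa [hxt0]
    have key := peg_a1_vec (x 0 - xs) (F (xt 0)) γ hγpos.le hmono'
    have hx1' : x 1 - xs = (x 0 - xs) - γ • F (xt 0) := by rw [hx1, hxt0]; abel
    calc a 1 = ‖(x 0 - xs) - γ • F (xt 0)‖^2 := by rw [ha_def]; simp only; rw [hx1']
      _ ≤ ‖x 0 - xs‖^2 + γ^2*‖F (xt 0)‖^2 := key
      _ = a 0 + γ^2 * (r 0)^2 := by rw [ha_def, hr_def]
  -- s recursion
  have hs0 : s 0 ≤ (2/3) * r 0 := by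
    have hdiff : xt 1 - xt 0 = -((2*γ) • F (xt 0)) := by
      rw [hR2 0, hx1, hxt0]
      module
    have h := hLip (xt 1) (xt 0)
    rw [hdiff, norm_neg, norm_smul, Real.norm_eq_abs, abs_of_pos (by linarith : (0:ℝ) < 2*γ)] at h
    have : L * (2*γ*‖F (xt 0)‖) = (2/3) * r 0 := by
      rw [hr_def]; simp only; nlinarith [hγL]
    rw [hs_def]; simp only; linarith [h, this.le, this.ge]
  have hsrec : ∀ k, s (k+1) ≤ (1/3) * (r (k+1) + s k) := by
    intro k
    have d1 : xt (k+2) - x (k+2) = -(γ • F (xt (k+1))) := by rw [hR2 (k+1)]; abel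
    have d2 : x (k+2) - x (k+1) = -(γ • F (xt (k+1))) := by rw [hR1 (k+1)]; abel
    have d3 : x (k+1) - xt (k+1) = γ • F (xt k) := by rw [hR2 k]; abel
    have hdiff : xt (k+2) - xt (k+1)
        = -((γ • F (xt (k+1))) + γ • (F (xt (k+1)) - F (xt k))) := by
      calc xt (k+2) - xt (k+1)
          = (xt (k+2) - x (k+2)) + (x (k+2) - x (k+1)) + (x (k+1) - xt (k+1)) := by abel
        _ = -(γ • F (xt (k+1))) + -(γ • F (xt (k+1))) + γ • F (xt k) := by rw [d1, d2, d3]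
        _ = -((γ • F (xt (k+1))) + γ • (F (xt (k+1)) - F (xt k))) := by module
    have h := hLip (xt (k+2)) (xt (k+1))
    rw [hdiff, norm_neg] at h
    have htri : ‖(γ • F (xt (k+1))) + γ • (F (xt (k+1)) - F (xt k))‖
        ≤ γ * r (k+1) + γ * s k := by
      refine (norm_add_le _ _).trans ?_
      rw [norm_smul, norm_smul, Real.norm_eq_abs, abs_of_pos hγpos]
    have h2 : s (k+1) ≤ L * (γ * r (k+1) + γ * s k) := by
      refine le_trans ?_ (le_trans (mul_le_mul_of_nonneg_left htri hL.le) (le_refl _))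
      exact h
    have h3 : L * (γ * r (k+1) + γ * s k) = (1/3) * (r (k+1) + s k) := by
      rw [← hγL]; ring
    linarith
  have hsq : ∀ k, (s (k+1))^2 ≤ (1/6)*(r (k+1))^2 + (1/3)*(s k)^2 := by
    intro k
    nlinarith [hsrec k, hsnn (k+1), hsnn k, hrnn (k+1),
      sq_nonneg (r (k+1) - 2 * s k)]
  -- Lyapunov-type quantity
  set Z : ℕ → ℝ := fun m => a (m+1) + (3/2)*γ^2*(s m)^2 - (1/4)*γ^2*(r m)^2 with hZ_def
  have hZstep : ∀ m, Z (m+1) ≤ Z m - (3/4)*γ^2*(r m)^2 := by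
    intro m
    have h1 := hdesc m
    have h2 := mul_le_mul_of_nonneg_left (hsq m) (sq_nonneg γ)
    simp only [hZ_def]
    nlinarith [h1, h2]
  set S : ℕ → ℝ := fun n => ∑ k ∈ Finset.range n, (r k)^2 with hS_def
  have hSnn : ∀ n, 0 ≤ S n := by
    intro n
    simp only [hS_def]
    exact Finset.sum_nonneg fun i _ => sq_nonneg _
  have hZtel : ∀ M, Z M + (3/4)*γ^2*(S M) ≤ Z 0 := by
    intro M
    induction M with
    | zero => simp [hS_def]
    | succ M ih =>
        have hstep := hZstep M
        have hSsucc : S (M+1) = S M + (r M)^2 := by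
          simp only [hS_def]
          exact Finset.sum_range_succ _ M
        rw [hSsucc]
        nlinarith [sq_nonneg γ]
  have hZlb : ∀ M, a (M+1) - (1/4)*γ^2*(r M)^2 ≤ Z M := by
    intro M
    simp only [hZ_def]
    nlinarith [mul_nonneg (sq_nonneg γ) (sq_nonneg (s M))]
  have haZ : ∀ M, a (M+1) ≤ Z 0 + (1/4)*γ^2*(r M)^2 := by
    intro M
    have h1 := hZtel M
    have h2 := hZlb M
    have h3 : 0 ≤ (3/4)*γ^2*(S M) := by
      have := mul_nonneg (sq_nonneg γ) (hSnn M)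
      nlinarith [this]
    linarith
  have hZ0 : Z 0 ≤ (125/108) * a 0 := by
    have h1 := ha1
    have hs0sq : (s 0)^2 ≤ (4/9)*(r 0)^2 := by
      nlinarith [hs0, hsnn 0, hrnn 0]
    have h2 : γ^2*(s 0)^2 ≤ (4/9)*(γ^2*(r 0)^2) := by
      nlinarith [mul_le_mul_of_nonneg_left hs0sq (sq_nonneg γ)]
    have h3 : γ^2*(r 0)^2 ≤ (1/9)*(a 0) := by
      have := hγr 0
      rw [hρ0] at this
      exact this
    simp only [hZ_def]
    nlinarith [h1, h2, h3]
  -- uniform bounds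
  have huni : ∀ k, a k ≤ (5/4) * a 0 ∧ (ρ k)^2 ≤ (45/16) * a 0 := by
    intro k
    induction k with
    | zero =>
        constructor
        · nlinarith [hann 0]
        · rw [hρ0]; nlinarith [hann 0]
    | succ k ih =>
        have hA : a (k+1) ≤ Z 0 + (1/4)*γ^2*(r k)^2 := haZ k
        have hg : γ^2*(r k)^2 ≤ (1/9)*(ρ k)^2 := hγr k
        have hak1 : a (k+1) ≤ (5/4) * a 0 := by nlinarith [hZ0, ih.2]
        constructor
        · exact hak1
        · have h := hρs k
          have hsq2 : (ρ (k+1))^2 ≤ (‖x (k+1) - xs‖ + γ * r k)^2 := by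
            have hnn : (0:ℝ) ≤ ‖x (k+1) - xs‖ + γ * r k :=
              add_nonneg (norm_nonneg _) (mul_nonneg hγpos.le (hrnn k))
            nlinarith [h, hρnn (k+1)]
          have hA2 : ‖x (k+1) - xs‖^2 = a (k+1) := by rw [ha_def]
          nlinarith [hsq2, hA2, hak1, hg, ih.2,
            sq_nonneg (‖x (k+1) - xs‖ - 2*(γ * r k)), hann (k+1)]
  have hγr516 : ∀ k, γ^2*(r k)^2 ≤ (5/16) * a 0 := by
    intro k
    have h1 := hγr k
    have h2 := (huni k).2
    linarith
  -- sum bound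
  have hSb : ∀ n, S n ≤ (2135/144) * L^2 * a 0 := by
    intro n
    have h1 := hZtel n
    have h2 := hZlb n
    have h3 := hγr516 n
    have h4 := hann (n+1)
    have key : (3/4)*γ^2*(S n) ≤ (2135/1728) * a 0 := by
      nlinarith [hZ0]
    have hγsq : γ^2 = 1/(9*L^2) := by
      rw [hγ]
      field_simp
      ring
    rw [hγsq] at key
    have hL2 : (0:ℝ) < L^2 := by positivity
    have e : L^2 * ((3/4)*(1/(9*L^2))*(S n)) = (1/12) * S n := by
      field_simp
      ring
    have h5 := mul_le_mul_of_nonneg_left key hL2.le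
    rw [e] at h5
    nlinarith [h5]
  -- the potential function
  set P : ℕ → ℝ := fun m =>
    ‖F (x (m+1))‖^2 - (1/4)*‖F (xt (m+1))‖^2 + (1/2)*‖F (xt m)‖^2
      + ⟪F (x (m+1)), F (xt (m+1))⟫ - (1/2)*⟪F (x (m+1)), F (xt m)⟫
      - (1/2)*⟪F (xt (m+1)), F (xt m)⟫ with hP_def
  have hsq13 : ∀ u v : EuclideanSpace ℝ (Fin d), ‖u‖ ≤ L*(γ*‖v‖) → ‖u‖^2 ≤ (1/9)*‖v‖^2 := by
    intro u v h
    have h2 : L*(γ*‖v‖) = (1/3)*‖v‖ := by rw [← hγL]; ring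
    rw [h2] at h
    nlinarith [norm_nonneg u, norm_nonneg v]
  have hinner_pos : ∀ u v : EuclideanSpace ℝ (Fin d), 0 ≤ ⟪u, γ • v⟫ → 0 ≤ ⟪u, v⟫ := by
    intro u v h
    rw [real_inner_smul_right] at h
    have h0 : γ * 0 ≤ γ * ⟪u, v⟫ := by simpa using h
    exact le_of_mul_le_mul_left h0 hγpos
  -- hypotheses of the certificates at index m (for x (m+1), xt (m+1), xt m)
  have hcertA : ∀ m, ‖F (x (m+1)) - F (xt (m+1))‖^2 ≤ (1/9)*‖F (xt m)‖^2 := by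
    intro m
    have hdiff : x (m+1) - xt (m+1) = γ • F (xt m) := by rw [hR2 m]; abel
    have h := hLip (x (m+1)) (xt (m+1))
    rw [hdiff, norm_smul, Real.norm_eq_abs, abs_of_pos hγpos] at h
    exact hsq13 _ _ (by linarith [h])
  have hcertB : ∀ m, 0 ≤ ⟪F (x (m+1)) - F (xt (m+1)), F (xt m)⟫ := by
    intro m
    have hdiff : x (m+1) - xt (m+1) = γ • F (xt m) := by rw [hR2 m]; abel
    have h := hmono (x (m+1)) (xt (m+1))
    rw [hdiff] at h
    exact hinner_pos _ _ h
  have hPstep : ∀ m, P (m+1) ≤ P m := by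
    intro m
    have hL9 : ‖F (xt (m+1)) - F (x (m+2))‖^2 ≤ (1/9)*‖F (xt (m+1)) - F (xt m)‖^2 := by
      have d1 : xt (m+1) - x (m+1) = -(γ • F (xt m)) := by rw [hR2 m]; abel
      have d2 : x (m+1) - x (m+2) = γ • F (xt (m+1)) := by rw [hR1 (m+1)]; abel
      have hdiff : xt (m+1) - x (m+2) = γ • (F (xt (m+1)) - F (xt m)) := by
        calc xt (m+1) - x (m+2)
            = (xt (m+1) - x (m+1)) + (x (m+1) - x (m+2)) := by abel
          _ = -(γ • F (xt m)) + γ • F (xt (m+1)) := by rw [d1, d2]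
          _ = γ • (F (xt (m+1)) - F (xt m)) := by module
      have h := hLip (xt (m+1)) (x (m+2))
      rw [hdiff, norm_smul, Real.norm_eq_abs, abs_of_pos hγpos] at h
      exact hsq13 _ _ (by linarith [h])
    have hM : 0 ≤ ⟪F (x (m+1)) - F (x (m+2)), F (xt (m+1))⟫ := by
      have hdiff : x (m+1) - x (m+2) = γ • F (xt (m+1)) := by
        rw [hR1 (m+1)]; abel
      have h := hmono (x (m+1)) (x (m+2))
      rw [hdiff] at h
      exact hinner_pos _ _ h
    simp only [hP_def]
    exact peg_cert_step (F (x (m+1))) (F (x (m+2))) (F (xt m)) (F (xt (m+1))) (F (xt (m+2)))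
      hL9 hM
  have hPlb : ∀ m, ‖F (x (m+1))‖^2 ≤ P m := by
    intro m
    simp only [hP_def]
    exact peg_cert_lb (F (x (m+1))) (F (xt (m+1))) (F (xt m)) (hcertA m) (hcertB m)
  have hPub : ∀ m, P m ≤ (5/2)*((r (m+1))^2 + (r m)^2) := by
    intro m
    simp only [hP_def, hr_def]
    exact peg_cert_ub (F (x (m+1))) (F (xt (m+1))) (F (xt m)) (hcertA m) (hcertB m)
  have hant : Antitone P := antitone_nat_of_succ_le hPstep
  -- summing the potential
  have hsum : ∀ M : ℕ, ((M:ℝ)+1) * P M ≤ 5 * S (M+2) := by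
    intro M
    have h1 : ∑ _m ∈ Finset.range (M+1), P M ≤ ∑ m ∈ Finset.range (M+1), P m := by
      refine Finset.sum_le_sum fun i hi => ?_
      exact hant (Nat.lt_succ_iff.mp (Finset.mem_range.mp hi))
    have h1' : ∑ _m ∈ Finset.range (M+1), P M = ((M:ℝ)+1) * P M := by
      rw [Finset.sum_const, Finset.card_range, nsmul_eq_mul]
      push_cast
      ring
    have h2 : ∑ m ∈ Finset.range (M+1), P m
        ≤ ∑ m ∈ Finset.range (M+1), (5/2)*((r (m+1))^2 + (r m)^2) :=
      Finset.sum_le_sum fun i _ => hPub i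
    have h3 : ∑ m ∈ Finset.range (M+1), (5/2)*((r (m+1))^2 + (r m)^2)
        = (5/2)*((∑ m ∈ Finset.range (M+1), (r (m+1))^2)
            + ∑ m ∈ Finset.range (M+1), (r m)^2) := by
      rw [← Finset.sum_add_distrib, ← Finset.mul_sum]
    have h4 : (∑ m ∈ Finset.range (M+1), (r (m+1))^2) + (r 0)^2 = S (M+2) := by
      simp only [hS_def]
      rw [show (M+2 : ℕ) = (M+1)+1 by omega]
      exact (Finset.sum_range_succ' (fun k => ‖F (xt k)‖^2) (M+1)).symm
    have h5 : S (M+1) ≤ S (M+2) := by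
      simp only [hS_def]
      rw [Finset.sum_range_succ _ (M+1)]
      nlinarith [sq_nonneg (r (M+1))]
    have h6 : ∑ m ∈ Finset.range (M+1), (r m)^2 = S (M+1) := by simp only [hS_def]
    linarith [sq_nonneg (r 0), h1'.symm.trans_le h1, h2, h3, h4, h5, h6]
  -- final assembly
  intro N
  have hNpos : (0:ℝ) < (N:ℝ) + 32 := by positivity
  rw [le_div_iff₀ hNpos]
  have hC : (0:ℝ) ≤ L^2 * ‖x 0 - xs‖^2 := by positivity
  have ha0 : a 0 = ‖x 0 - xs‖^2 := by rw [ha_def]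
  rcases le_or_gt N 66 with hN | hN
  · -- small N : trivial bound
    have h1 : ‖F (x N)‖ ≤ L * ‖x N - xs‖ := hF0 (x N)
    have h2 : ‖F (x N)‖^2 ≤ L^2 * a N := by
      simp only [ha_def]
      nlinarith [norm_nonneg (F (x N)), norm_nonneg (x N - xs), hL.le]
    have h3 : a N ≤ (5/4) * a 0 := (huni N).1
    have hNc : (N:ℝ) ≤ 66 := by exact_mod_cast hN
    have h4 : ‖F (x N)‖^2 ≤ (5/4) * (L^2 * a 0) := by nlinarith [sq_nonneg L]
    rw [ha0] at h4
    nlinarith [sq_nonneg ‖F (x N)‖]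
  · -- large N
    obtain ⟨M, rfl⟩ : ∃ M, N = M + 1 := ⟨N-1, by omega⟩
    have hX := hPlb M
    have hs1 := hsum M
    have hSb1 := hSb (M+2)
    have hn67 : (67:ℝ) ≤ (M:ℝ) + 1 := by
      have : (67:ℕ) ≤ M+1 := by omega
      exact_mod_cast this
    set n : ℝ := (M:ℝ) + 1 with hn_def
    have hnpos : (0:ℝ) < n := by simp only [hn_def]; positivity
    have hXnn : (0:ℝ) ≤ ‖F (x (M+1))‖^2 := sq_nonneg _
    have hnX : n * ‖F (x (M+1))‖^2 ≤ (10675/144) * (L^2 * a 0) := by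
      have h6 : n * ‖F (x (M+1))‖^2 ≤ n * P M :=
        mul_le_mul_of_nonneg_left hX hnpos.le
      have h7 : n * P M ≤ 5 * S (M+2) := hs1
      nlinarith [hSb1]
    have hcast : ((M+1 : ℕ):ℝ) = n := by simp only [hn_def]; push_cast; ring
    rw [hcast, ← ha0]
    have hCa : (0:ℝ) ≤ L^2 * a 0 := by rw [ha0]; positivity
    have hfin := peg_final_arith (‖F (x (M+1))‖^2) (L^2 * a 0) n hXnn hCa hn67 hnX
    linarith [hfin]
end

section
/- Let X ⊆ R^d be nonempty closed convex and F be L-Lipschitz. If x̃^{k-1} = proj_X[x^{k-1} - γ F(x̃^{k-2})], x^k = proj_X[x^{k-1} - γ F(x̃^{k-1})], x̃^k = proj_X[x^k - γ F(x̃^{k-1})], then ‖x̃^k - x̃^{k-1}‖² ≤ 4‖x̃^k - x^k‖² + 4γ²L²‖x̃^{k-1} - x̃^{k-2}‖² - ‖x̃^k - x̃^{k-1}‖². -/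
open scoped RealInnerProductSpace

/-- `IsProjOn X z p` means `p` is the Euclidean projection of `z` onto `X`:
`p ∈ X` and `p` minimizes the distance to `z` over `X`. -/
def IsProjOn {d : ℕ} (X : Set (EuclideanSpace ℝ (Fin d))) (z p : EuclideanSpace ℝ (Fin d)) : Prop :=
  p ∈ X ∧ ∀ y ∈ X, ‖p - z‖ ≤ ‖y - z‖

lemma isProjOn_inner_le {d : ℕ} {X : Set (EuclideanSpace ℝ (Fin d))} (hX : Convex ℝ X)
    {z p : EuclideanSpace ℝ (Fin d)} (hp : IsProjOn X z p) :
    ∀ w ∈ X, ⟪z - p, w - p⟫ ≤ 0 := by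
  have hmem := hp.1
  have heq : ‖z - p‖ = ⨅ w : X, ‖z - w‖ := by
    have hne : Nonempty X := ⟨⟨p, hmem⟩⟩
    apply le_antisymm
    · exact le_ciInf fun w => by
        simpa [norm_sub_rev z] using hp.2 w w.2
    · exact ciInf_le ⟨0, fun x ⟨w, hw⟩ => hw ▸ norm_nonneg _⟩ (⟨p, hmem⟩ : X)
  exact (norm_eq_iInf_iff_real_inner_le_zero hX hmem).1 heq

lemma isProjOn_nonexpansive {d : ℕ} {X : Set (EuclideanSpace ℝ (Fin d))} (hX : Convex ℝ X)
    {z1 z2 p1 p2 : EuclideanSpace ℝ (Fin d)}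
    (h1 : IsProjOn X z1 p1) (h2 : IsProjOn X z2 p2) : ‖p1 - p2‖ ≤ ‖z1 - z2‖ := by
  have k1 := isProjOn_inner_le hX h1 p2 h2.1
  have k2 := isProjOn_inner_le hX h2 p1 h1.1
  have key : ‖p1 - p2‖ ^ 2 ≤ ⟪z1 - z2, p1 - p2⟫ := by
    have : ⟪(z1 - z2) - (p1 - p2), p1 - p2⟫ ≥ 0 := by
      have : ⟪(z1 - z2) - (p1 - p2), p1 - p2⟫ = -⟪z1 - p1, p2 - p1⟫ - ⟪z2 - p2, p1 - p2⟫ := by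
        simp only [inner_sub_left, inner_sub_right]
        ring
      linarith [this]
    have expand : ⟪z1 - z2, p1 - p2⟫ = ⟪(z1 - z2) - (p1 - p2), p1 - p2⟫ + ‖p1 - p2‖ ^ 2 := by
      simp only [inner_sub_left, inner_sub_right, real_inner_self_eq_norm_sq, norm_sub_sq_real,
        real_inner_comm p2 p1]; ring
    linarith
  have cs : ⟪z1 - z2, p1 - p2⟫ ≤ ‖z1 - z2‖ * ‖p1 - p2‖ := real_inner_le_norm _ _
  by_cases h : ‖p1 - p2‖ = 0
  · rw [h]; exact norm_nonneg _
  · have hpos : 0 < ‖p1 - p2‖ := lt_of_le_of_ne (norm_nonneg _) (Ne.symm h)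
    nlinarith

theorem proj_peg_lemma6 (d : ℕ) (X : Set (EuclideanSpace ℝ (Fin d)))
    (hX : X.Nonempty) (hXc : IsClosed X) (hXconv : Convex ℝ X)
    (F : EuclideanSpace ℝ (Fin d) → EuclideanSpace ℝ (Fin d)) (L γ : ℝ)
    (hLip : ∀ x y, ‖F x - F y‖ ≤ L * ‖x - y‖)
    (hγ : 0 < γ)
    (xkm xk xtmm xtm xt : EuclideanSpace ℝ (Fin d))
    (hxtm : IsProjOn X (xkm - γ • F xtmm) xtm)
    (hxk : IsProjOn X (xkm - γ • F xtm) xk)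
    (hxt : IsProjOn X (xk - γ • F xtm) xt) :
    ‖xt - xtm‖ ^ 2 ≤
      4 * ‖xt - xk‖ ^ 2 + 4 * γ ^ 2 * L ^ 2 * ‖xtm - xtmm‖ ^ 2 - ‖xt - xtm‖ ^ 2 := by
  have hb : ‖xk - xtm‖ ≤ γ * (L * ‖xtm - xtmm‖) := by
    have h1 : ‖xk - xtm‖ ≤ ‖(xkm - γ • F xtm) - (xkm - γ • F xtmm)‖ :=
      isProjOn_nonexpansive hXconv hxk hxtm
    have h2 : (xkm - γ • F xtm) - (xkm - γ • F xtmm) = γ • (F xtmm - F xtm) := by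
      module
    rw [h2, norm_smul] at h1
    have h3 : ‖F xtmm - F xtm‖ ≤ L * ‖xtm - xtmm‖ := by
      rw [norm_sub_rev xtm xtmm]; exact hLip xtmm xtm
    calc ‖xk - xtm‖ ≤ ‖γ‖ * ‖F xtmm - F xtm‖ := h1
      _ = γ * ‖F xtmm - F xtm‖ := by rw [Real.norm_eq_abs, abs_of_pos hγ]
      _ ≤ γ * (L * ‖xtm - xtmm‖) := by
          exact mul_le_mul_of_nonneg_left h3 hγ.le
  have htri : ‖xt - xtm‖ ≤ ‖xt - xk‖ + ‖xk - xtm‖ := norm_sub_le_norm_sub_add_norm_sub _ _ _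
  have hb0 : (0:ℝ) ≤ ‖xk - xtm‖ := norm_nonneg _
  have hc0 : (0:ℝ) ≤ ‖xt - xtm‖ := norm_nonneg _
  have hb2 : ‖xk - xtm‖ ^ 2 ≤ (γ * (L * ‖xtm - xtmm‖)) ^ 2 := pow_le_pow_left₀ hb0 hb 2
  nlinarith [sq_nonneg (‖xt - xk‖ - ‖xk - xtm‖), sq_nonneg (‖xt - xk‖ + ‖xk - xtm‖ - ‖xt - xtm‖)]
end

section
/- Let X ⊆ R^d be nonempty closed convex, F monotone and L-Lipschitz, γ > 0. Given a projected PEG step: x^k = proj_X[x^{k-1} - γ F(x̃^{k-1})], x̃^k = proj_X[x^k - γ F(x̃^{k-1})], x^{k+1} = proj_X[x^k - γ F(x̃^k)], and defining Ψ_k = ‖x^k - x^{k-1}‖² + ‖x^k - x^{k-1} - 2γ(F(x^k) - F(x̃^{k-1}))‖², the following holds: Ψ_{k+1} ≤ Ψ_k - (1 - 5L²γ²)‖x^{k+1} - x̃^k‖² - γ²‖F(x^{k+1}) - F(x̃^k)‖². -/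
open scoped RealInnerProductSpace

/-- Variational inequality characterization (one direction) of projection onto a convex set. -/
lemma proj_vi {d : ℕ} {X : Set (EuclideanSpace ℝ (Fin d))} (hXconv : Convex ℝ X)
    {z p : EuclideanSpace ℝ (Fin d)} (hp : IsProjOn X z p) :
    ∀ y ∈ X, ⟪z - p, y - p⟫ ≤ 0 := by
  intro y hy
  by_contra hcon
  push_neg at hcon
  set s : ℝ := ⟪z - p, y - p⟫ with hs
  have hyp : ‖y - p‖ ^ 2 ≠ 0 := by
    intro h0
    have : y - p = 0 := by
      have := pow_eq_zero_iff (n := 2) (by norm_num) |>.mp h0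
      simpa using this
    rw [hs, this] at hcon
    simp at hcon
  have hqpos : (0:ℝ) < ‖y - p‖ ^ 2 := lt_of_le_of_ne (by positivity) (Ne.symm hyp)
  set t : ℝ := min 1 (s / ‖y - p‖ ^ 2) with ht
  have ht0 : 0 < t := lt_min one_pos (div_pos hcon hqpos)
  have ht1 : t ≤ 1 := min_le_left _ _
  have hmem : p + t • (y - p) ∈ X := by
    have := hXconv hp.1 hy (by linarith : (0:ℝ) ≤ 1 - t) ht0.le (by ring)
    convert this using 1
    module
  have hle := hp.2 _ hmem
  have hexp : ‖p + t • (y - p) - z‖ ^ 2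
      = ‖p - z‖ ^ 2 - 2 * t * s + t ^ 2 * ‖y - p‖ ^ 2 := by
    have e1 : p + t • (y - p) - z = (p - z) + t • (y - p) := by module
    rw [e1]
    rw [← real_inner_self_eq_norm_sq, ← real_inner_self_eq_norm_sq, ← real_inner_self_eq_norm_sq]
    simp only [inner_add_left, inner_add_right, real_inner_smul_left, real_inner_smul_right,
      inner_sub_left, inner_sub_right, hs]
    rw [real_inner_comm p z, real_inner_comm y p, real_inner_comm y z]
    ring
  have hsq : ‖p - z‖ ^ 2 ≤ ‖p + t • (y - p) - z‖ ^ 2 := by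
    have h1 : (0:ℝ) ≤ ‖p - z‖ := norm_nonneg _
    nlinarith [hle, norm_nonneg (p + t • (y - p) - z)]
  rw [hexp] at hsq
  have hts : t * ‖y - p‖ ^ 2 ≤ s := by
    have : t ≤ s / ‖y - p‖ ^ 2 := min_le_right _ _
    calc t * ‖y - p‖ ^ 2 ≤ (s / ‖y - p‖ ^ 2) * ‖y - p‖ ^ 2 := by
          exact mul_le_mul_of_nonneg_right this hqpos.le
      _ = s := div_mul_cancel₀ s hyp
  nlinarith [ht0, hts, hsq]

theorem proj_peg_key_lemma (d : ℕ) (X : Set (EuclideanSpace ℝ (Fin d)))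
    (hX : X.Nonempty) (hXc : IsClosed X) (hXconv : Convex ℝ X)
    (F : EuclideanSpace ℝ (Fin d) → EuclideanSpace ℝ (Fin d)) (L γ : ℝ)
    (hmono : ∀ x y, 0 ≤ ⟪F x - F y, x - y⟫)
    (hLip : ∀ x y, ‖F x - F y‖ ≤ L * ‖x - y‖)
    (hγ : 0 < γ)
    (xkm xk xk1 xtm xt : EuclideanSpace ℝ (Fin d))
    (hxk : IsProjOn X (xkm - γ • F xtm) xk)
    (hxt : IsProjOn X (xk - γ • F xtm) xt)
    (hxk1 : IsProjOn X (xk - γ • F xt) xk1) :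
    ‖xk1 - xk‖ ^ 2 + ‖xk1 - xk - (2 * γ) • (F xk1 - F xt)‖ ^ 2 ≤
      ‖xk - xkm‖ ^ 2 + ‖xk - xkm - (2 * γ) • (F xk - F xtm)‖ ^ 2 -
        (1 - 5 * L ^ 2 * γ ^ 2) * ‖xk1 - xt‖ ^ 2 - γ ^ 2 * ‖F xk1 - F xt‖ ^ 2 := by
  have hP1t := proj_vi hXconv hxk xt hxt.1
  have hP1c := proj_vi hXconv hxk xk1 hxk1.1
  have hP2c := proj_vi hXconv hxt xk1 hxk1.1
  have hP3k := proj_vi hXconv hxk1 xk hxk.1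
  have hM : 0 ≤ γ * ⟪F xk1 - F xk, xk1 - xk⟫ := mul_nonneg hγ.le (hmono xk1 xk)
  have hLsq : γ ^ 2 * ‖F xk1 - F xt‖ ^ 2 ≤ L ^ 2 * γ ^ 2 * ‖xk1 - xt‖ ^ 2 := by
    have h := hLip xk1 xt
    have h2 : ‖F xk1 - F xt‖ ^ 2 ≤ L ^ 2 * ‖xk1 - xt‖ ^ 2 := by
      have h3 := mul_self_le_mul_self (norm_nonneg (F xk1 - F xt)) h
      nlinarith [h3]
    nlinarith [mul_le_mul_of_nonneg_left h2 (sq_nonneg γ)]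
  have hS1 : (0:ℝ) ≤ ‖(2:ℝ) • (xk - xkm) - (xk1 - xk) - (xt - xk)
      + (2 * γ) • (F xtm - F xk)‖ ^ 2 := by positivity
  have hS2 : (0:ℝ) ≤ ‖(xk1 - xk) - (xt - xk) - (2 * γ) • (F xtm - F xk)‖ ^ 2 := by positivity
  have key : ‖xk1 - xk‖ ^ 2 + ‖xk1 - xk - (2 * γ) • (F xk1 - F xt)‖ ^ 2
      - (‖xk - xkm‖ ^ 2 + ‖xk - xkm - (2 * γ) • (F xk - F xtm)‖ ^ 2
        - (1 - 5 * L ^ 2 * γ ^ 2) * ‖xk1 - xt‖ ^ 2 - γ ^ 2 * ‖F xk1 - F xt‖ ^ 2)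
      = 2 * ⟪(xkm - γ • F xtm) - xk, xt - xk⟫
        + 2 * ⟪(xkm - γ • F xtm) - xk, xk1 - xk⟫
        + 2 * ⟪(xk - γ • F xtm) - xt, xk1 - xt⟫
        + 4 * ⟪(xk - γ • F xt) - xk1, xk - xk1⟫
        - 4 * (γ * ⟪F xk1 - F xk, xk1 - xk⟫)
        - (1/2) * ‖(2:ℝ) • (xk - xkm) - (xk1 - xk) - (xt - xk)
            + (2 * γ) • (F xtm - F xk)‖ ^ 2
        - (1/2) * ‖(xk1 - xk) - (xt - xk) - (2 * γ) • (F xtm - F xk)‖ ^ 2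
        - 5 * (L ^ 2 * γ ^ 2 * ‖xk1 - xt‖ ^ 2 - γ ^ 2 * ‖F xk1 - F xt‖ ^ 2) := by
    simp only [← real_inner_self_eq_norm_sq, inner_sub_left, inner_sub_right,
      inner_add_left, inner_add_right, real_inner_smul_left, real_inner_smul_right]
    simp only [real_inner_comm xk xkm, real_inner_comm xk1 xkm, real_inner_comm xt xkm,
      real_inner_comm (F xtm) xkm, real_inner_comm (F xk) xkm, real_inner_comm (F xk1) xkm,
      real_inner_comm (F xt) xkm,
      real_inner_comm xk1 xk, real_inner_comm xt xk, real_inner_comm (F xtm) xk,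
      real_inner_comm (F xk) xk, real_inner_comm (F xk1) xk, real_inner_comm (F xt) xk,
      real_inner_comm xt xk1, real_inner_comm (F xtm) xk1, real_inner_comm (F xk) xk1,
      real_inner_comm (F xk1) xk1, real_inner_comm (F xt) xk1,
      real_inner_comm (F xtm) xt, real_inner_comm (F xk) xt, real_inner_comm (F xk1) xt,
      real_inner_comm (F xt) xt,
      real_inner_comm (F xk) (F xtm), real_inner_comm (F xk1) (F xtm),
      real_inner_comm (F xt) (F xtm), real_inner_comm (F xk1) (F xk),
      real_inner_comm (F xt) (F xk), real_inner_comm (F xt) (F xk1)]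
    ring
  linarith [hP1t, hP1c, hP2c, hP3k, hM, hLsq, hS1, hS2, key]
end

section
/- Let X ⊆ R^d closed convex, F monotone and L-Lipschitz, x* a solution of the VI on X, and consider projected PEG iterates with x^1 = proj_X[x^0 - γF(x^0)], x̃^1 = proj_X[x^1 - γF(x^0)], x^2 = proj_X[x^1 - γF(x̃^1)]. Then ‖x^2 - x*‖² ≤ 2(1 + 3γ²L² + 4γ⁴L⁴)‖x^0 - x*‖². -/
open scoped RealInnerProductSpace

/-- Variational characterization of the projection onto a convex set. -/
lemma projOn_inner_le {d : ℕ} {X : Set (EuclideanSpace ℝ (Fin d))}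
    (hXconv : Convex ℝ X) {z p : EuclideanSpace ℝ (Fin d)} (hp : IsProjOn X z p)
    {y : EuclideanSpace ℝ (Fin d)} (hy : y ∈ X) : ⟪z - p, y - p⟫ ≤ 0 := by
  by_contra h
  push_neg at h
  set c : ℝ := ⟪z - p, y - p⟫ with hc
  set D : ℝ := ‖y - p‖ ^ 2 with hD
  have hden : 0 < D + 1 := by positivity
  set lam : ℝ := min 1 (c / (D + 1)) with hlam
  have hlam0 : 0 < lam := lt_min one_pos (div_pos h hden)
  have hlam1 : lam ≤ 1 := min_le_left _ _
  have hlam2 : lam * (D + 1) ≤ c := by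
    have := min_le_right 1 (c / (D + 1))
    calc lam * (D + 1) ≤ (c / (D + 1)) * (D + 1) :=
          mul_le_mul_of_nonneg_right this hden.le
      _ = c := div_mul_cancel₀ c hden.ne'
  have hmem : p + lam • (y - p) ∈ X := by
    have h2 := hXconv hp.1 hy (by linarith : (0:ℝ) ≤ 1 - lam) hlam0.le (by ring)
    have : (1 - lam) • p + lam • y = p + lam • (y - p) := by
      rw [smul_sub, sub_smul, one_smul]; abel
    rwa [this] at h2
  have hle := hp.2 _ hmem
  have hexp : ‖p + lam • (y - p) - z‖ ^ 2
      = ‖p - z‖ ^ 2 + 2 * (lam * (-c)) + lam ^ 2 * D := by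
    have e1 : p + lam • (y - p) - z = (p - z) + lam • (y - p) := by abel
    rw [e1, norm_add_sq_real, real_inner_smul_right, norm_smul]
    have e2 : ⟪p - z, y - p⟫ = -c := by
      rw [hc, ← inner_neg_left]; congr 1; abel
    rw [e2, mul_pow, Real.norm_eq_abs, sq_abs, hD]
  have hsq : ‖p - z‖ ^ 2 ≤ ‖p + lam • (y - p) - z‖ ^ 2 :=
    pow_le_pow_left₀ (norm_nonneg _) hle 2
  rw [hexp] at hsq
  -- 0 ≤ -2*lam*c + lam^2*D, with lam*(D+1) ≤ c, lam > 0, c > 0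
  have hD2 : lam * (lam * D) ≤ lam * c := by
    have : lam * D ≤ c := by nlinarith
    exact mul_le_mul_of_nonneg_left this hlam0.le
  nlinarith

/-- Distance from a projection to a VI solution point. -/
lemma projOn_dist_le {d : ℕ} {X : Set (EuclideanSpace ℝ (Fin d))}
    (hXconv : Convex ℝ X) {z p w g : EuclideanSpace ℝ (Fin d)} (hp : IsProjOn X z p)
    (hw : w ∈ X) (hg : 0 ≤ ⟪g, p - w⟫) : ‖p - w‖ ≤ ‖z - (w - g)‖ := by
  have h1 : ⟪z - p, w - p⟫ ≤ 0 := projOn_inner_le hXconv hp hw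
  have h1' : 0 ≤ ⟪z - p, p - w⟫ := by
    have e : ⟪z - p, p - w⟫ = -⟪z - p, w - p⟫ := by
      rw [← inner_neg_right]; congr 1; abel
    rw [e]; linarith
  have key : ‖p - w‖ ^ 2 ≤ ⟪z - (w - g), p - w⟫ := by
    have expand : ⟪z - (w - g), p - w⟫
        = ⟪p - w, p - w⟫ + ⟪z - p, p - w⟫ + ⟪g, p - w⟫ := by
      simp only [inner_sub_left]; ring
    rw [expand, real_inner_self_eq_norm_sq]
    linarith
  have h2 : ⟪z - (w - g), p - w⟫ ≤ ‖z - (w - g)‖ * ‖p - w‖ := real_inner_le_norm _ _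
  nlinarith [norm_nonneg (p - w), norm_nonneg (z - (w - g))]

/-- Young-type bound for `‖u - γ • v‖²`. -/
lemma sq_sub_smul_le {d : ℕ} (u v : EuclideanSpace ℝ (Fin d)) (γ : ℝ) :
    ‖u - γ • v‖ ^ 2 ≤ 2 * ‖u‖ ^ 2 + 2 * γ ^ 2 * ‖v‖ ^ 2 := by
  rw [norm_sub_sq_real, real_inner_smul_right, norm_smul, mul_pow, Real.norm_eq_abs, sq_abs]
  have h5 : -(γ * ⟪u, v⟫) ≤ |γ| * (‖u‖ * ‖v‖) := by
    calc -(γ * ⟪u, v⟫) ≤ |γ * ⟪u, v⟫| := neg_le_abs _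
      _ = |γ| * |⟪u, v⟫| := abs_mul _ _
      _ ≤ |γ| * (‖u‖ * ‖v‖) := mul_le_mul_of_nonneg_left (abs_real_inner_le_norm u v) (abs_nonneg γ)
  nlinarith [sq_nonneg (‖u‖ - |γ| * ‖v‖), sq_abs γ]

/-- Scalar step: squared distance bound through a Lipschitz estimate. -/
lemma sq_chain (Q N A V g L W : ℝ) (hQN : Q ≤ N) (hN : N ≤ 2 * A + 2 * g ^ 2 * V ^ 2)
    (hV : V ≤ L * W) (hV0 : 0 ≤ V) :
    Q ≤ 2 * A + 2 * g ^ 2 * L ^ 2 * W ^ 2 := by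
  have hV2 : V ^ 2 ≤ L ^ 2 * W ^ 2 := by nlinarith
  nlinarith [sq_nonneg g]

lemma combine_scalar (R A W2 Q g : ℝ) (hg : 0 ≤ g) (hA : A ≤ (1 + g) * R ^ 2)
    (hW : W2 ≤ 2 * A + 2 * g * R ^ 2) (hQ : Q ≤ 2 * A + 2 * g * W2) :
    Q ≤ 2 * (1 + 3 * g + 4 * g ^ 2) * R ^ 2 := by
  nlinarith [mul_le_mul_of_nonneg_left hW hg,
    mul_le_mul_of_nonneg_left hA (by linarith : (0:ℝ) ≤ 4 * g)]

theorem proj_second_step_distance (d : ℕ) (X : Set (EuclideanSpace ℝ (Fin d)))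
    (hX : X.Nonempty) (hXc : IsClosed X) (hXconv : Convex ℝ X)
    (F : EuclideanSpace ℝ (Fin d) → EuclideanSpace ℝ (Fin d)) (L γ : ℝ)
    (hmono : ∀ x y, 0 ≤ ⟪F x - F y, x - y⟫)
    (hLip : ∀ x y, ‖F x - F y‖ ≤ L * ‖x - y‖)
    (hγ : 0 < γ)
    (xs : EuclideanSpace ℝ (Fin d)) (hxsX : xs ∈ X)
    (hxs : ∀ x ∈ X, 0 ≤ ⟪F xs, x - xs⟫)
    (x0 x1 xt1 x2 : EuclideanSpace ℝ (Fin d)) (hx0 : x0 ∈ X)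
    (hx1 : IsProjOn X (x0 - γ • F x0) x1)
    (hxt1 : IsProjOn X (x1 - γ • F x0) xt1)
    (hx2 : IsProjOn X (x1 - γ • F xt1) x2) :
    ‖x2 - xs‖ ^ 2 ≤
      2 * (1 + 3 * γ ^ 2 * L ^ 2 + 4 * γ ^ 4 * L ^ 4) * ‖x0 - xs‖ ^ 2 := by
  set R : ℝ := ‖x0 - xs‖ with hR
  set t : ℝ := ‖x1 - x0‖ with ht
  set A : ℝ := ‖x1 - xs‖ ^ 2 with hA'
  set W : ℝ := ‖xt1 - xs‖ with hW'
  -- Step (i): A ≤ (1 + γ²L²) R²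
  have hsub : x1 - x0 = (x1 - xs) - (x0 - xs) := by abel
  have f1 : A = R ^ 2 - t ^ 2 + 2 * ⟪x1 - x0, x1 - xs⟫ := by
    have e1 : t ^ 2 = A - 2 * ⟪x1 - xs, x0 - xs⟫ + R ^ 2 := by
      rw [ht, hsub, norm_sub_sq_real, hA', hR]
    have e2 : ⟪x1 - x0, x1 - xs⟫ = A - ⟪x1 - xs, x0 - xs⟫ := by
      rw [hsub, inner_sub_left, real_inner_self_eq_norm_sq, ← hA',
        real_inner_comm (x0 - xs) (x1 - xs)]
    linarith
  have f2 : ⟪x1 - x0, x1 - xs⟫ ≤ γ * ⟪F x0, xs - x1⟫ := by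
    have h := projOn_inner_le hXconv hx1 hxsX
    have e : (⟪x1 - x0, x1 - xs⟫ : ℝ)
        = ⟪x0 - γ • F x0 - x1, xs - x1⟫ + γ * ⟪F x0, xs - x1⟫ := by
      simp only [inner_sub_left, inner_sub_right, real_inner_smul_left]; ring
    rw [e]
    linarith
  have lip0 : ‖F x0 - F xs‖ ≤ L * R := hLip x0 xs
  have hLR : 0 ≤ L * R := le_trans (norm_nonneg _) lip0
  have f3 : ⟪F x0, xs - x1⟫ ≤ L * R * t := by
    have e : ⟪F x0, xs - x1⟫
        = -⟪F x0 - F xs, x1 - x0⟫ - ⟪F x0 - F xs, x0 - xs⟫ - ⟪F xs, x1 - xs⟫ := by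
      simp only [inner_sub_left, inner_sub_right]; ring
    have m1 : 0 ≤ ⟪F x0 - F xs, x0 - xs⟫ := hmono x0 xs
    have m2 : 0 ≤ ⟪F xs, x1 - xs⟫ := hxs x1 hx1.1
    have cs : -⟪F x0 - F xs, x1 - x0⟫ ≤ ‖F x0 - F xs‖ * t := by
      have h := real_inner_le_norm (F x0 - F xs) (x0 - x1)
      have e2 : ⟪F x0 - F xs, x0 - x1⟫ = -⟪F x0 - F xs, x1 - x0⟫ := by
        rw [← inner_neg_right]; congr 1; abel
      rw [e2] at h
      calc -⟪F x0 - F xs, x1 - x0⟫ ≤ ‖F x0 - F xs‖ * ‖x0 - x1‖ := h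
        _ = ‖F x0 - F xs‖ * t := by rw [norm_sub_rev x0 x1]
    have lipt : ‖F x0 - F xs‖ * t ≤ L * R * t :=
      mul_le_mul_of_nonneg_right lip0 (norm_nonneg _)
    rw [e]
    linarith
  have hAb : A ≤ (1 + γ ^ 2 * L ^ 2) * R ^ 2 := by
    have h4 : γ * ⟪F x0, xs - x1⟫ ≤ γ * (L * R * t) :=
      mul_le_mul_of_nonneg_left f3 hγ.le
    nlinarith [sq_nonneg (t - γ * (L * R))]
  -- Step (ii): W² ≤ 2A + 2γ²L²R²
  have hWle : W ≤ ‖(x1 - xs) - γ • (F x0 - F xs)‖ := by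
    have h := projOn_dist_le hXconv hxt1 hxsX (g := γ • F xs)
      (by rw [real_inner_smul_left]; exact mul_nonneg hγ.le (hxs xt1 hxt1.1))
    have e : x1 - γ • F x0 - (xs - γ • F xs) = (x1 - xs) - γ • (F x0 - F xs) := by
      rw [smul_sub]; abel
    rwa [e] at h
  have hW2 : W ^ 2 ≤ 2 * A + 2 * γ ^ 2 * L ^ 2 * R ^ 2 := by
    have h1 : W ^ 2 ≤ ‖(x1 - xs) - γ • (F x0 - F xs)‖ ^ 2 :=
      pow_le_pow_left₀ (norm_nonneg _) hWle 2
    exact sq_chain _ _ A ‖F x0 - F xs‖ γ L R h1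
      (sq_sub_smul_le (x1 - xs) (F x0 - F xs) γ) lip0 (norm_nonneg _)
  -- Step (iii): ‖x2 - xs‖² ≤ 2A + 2γ²L²W²
  have lipW : ‖F xt1 - F xs‖ ≤ L * W := hLip xt1 xs
  have hX2 : ‖x2 - xs‖ ^ 2 ≤ 2 * A + 2 * γ ^ 2 * L ^ 2 * W ^ 2 := by
    have h := projOn_dist_le hXconv hx2 hxsX (g := γ • F xs)
      (by rw [real_inner_smul_left]; exact mul_nonneg hγ.le (hxs x2 hx2.1))
    have e : x1 - γ • F xt1 - (xs - γ • F xs) = (x1 - xs) - γ • (F xt1 - F xs) := by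
      rw [smul_sub]; abel
    rw [e] at h
    have h1 : ‖x2 - xs‖ ^ 2 ≤ ‖(x1 - xs) - γ • (F xt1 - F xs)‖ ^ 2 :=
      pow_le_pow_left₀ (norm_nonneg _) h 2
    exact sq_chain _ _ A ‖F xt1 - F xs‖ γ L W h1
      (sq_sub_smul_le (x1 - xs) (F xt1 - F xs) γ) lipW (norm_nonneg _)
  -- Combine
  have hgl : (0:ℝ) ≤ γ ^ 2 * L ^ 2 := by positivity
  have hcomb := combine_scalar R A (W ^ 2) (‖x2 - xs‖ ^ 2) (γ ^ 2 * L ^ 2) hgl hAb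
    (by linarith) (by linarith)
  have e : 2 * (1 + 3 * γ ^ 2 * L ^ 2 + 4 * γ ^ 4 * L ^ 4) * R ^ 2
      = 2 * (1 + 3 * (γ ^ 2 * L ^ 2) + 4 * (γ ^ 2 * L ^ 2) ^ 2) * R ^ 2 := by ring
  rw [e]
  exact hcomb
end
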